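/- Let M be a Garside monoid, let Δ₁ and Δ₂ be Garside elements of M, and let d be a greatest common lower bound of Δ₁ and Δ₂ with respect to ≤_L. Then d is also a greatest common lower bound of Δ₁ and Δ₂ with respect to ≤_R, and d is a Garside element of M. -/

import Mathlib

/-- `a` left-divides `b` in the monoid `M`. -/
def dvdL {M : Type*} [Monoid M] (a b : M) : Prop := ∃ c, a * c = b

/-- `a` right-divides `b` in the monoid `M`. -/
def dvdR {M : Type*} [Monoid M] (a b : M) : Prop := ∃ c, c * a = b

/-- `L(a)`, the set of left divisors of `a`. -/
def Lset {M : Type*} [Monoid M] (a : M) : Set M := {x | dvdL x a}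

/-- `R(a)`, the set of right divisors of `a`. -/
def Rset {M : Type*} [Monoid M] (a : M) : Set M := {x | dvdR x a}

/-- `a` is an atom: `a ≠ 1` and `a = b * c` implies `b = 1` or `c = 1`. -/
def IsAtomElt {M : Type*} [Monoid M] (a : M) : Prop :=
  a ≠ 1 ∧ ∀ b c : M, a = b * c → b = 1 ∨ c = 1

/-- `M` is atomic: every element is a finite product of atoms, and the lengths of
expressions of a given element as products of atoms are bounded above. -/
def Atomic (M : Type*) [Monoid M] : Prop :=
  (∀ a : M, ∃ l : List M, (∀ x ∈ l, IsAtomElt x) ∧ l.prod = a) ∧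
  (∀ a : M, ∃ N : ℕ, ∀ l : List M, (∀ x ∈ l, IsAtomElt x) → l.prod = a → l.length ≤ N)

/-- `Δ` is a Garside element: `L(Δ) = R(Δ)` and `L(Δ)` generates `M`. -/
def IsGarsideElt {M : Type*} [Monoid M] (Δ : M) : Prop :=
  Lset Δ = Rset Δ ∧ Submonoid.closure (Lset Δ) = ⊤

/-- `d` is a greatest common lower bound of `a` and `b` with respect to `≤_L`. -/
def IsGlbL {M : Type*} [Monoid M] (a b d : M) : Prop :=
  dvdL d a ∧ dvdL d b ∧ ∀ c : M, dvdL c a → dvdL c b → dvdL c d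

/-- `d` is a least common upper bound of `a` and `b` with respect to `≤_L`. -/
def IsLubL {M : Type*} [Monoid M] (a b d : M) : Prop :=
  dvdL a d ∧ dvdL b d ∧ ∀ c : M, dvdL a c → dvdL b c → dvdL d c

/-- `d` is a greatest common lower bound of `a` and `b` with respect to `≤_R`. -/
def IsGlbR {M : Type*} [Monoid M] (a b d : M) : Prop :=
  dvdR d a ∧ dvdR d b ∧ ∀ c : M, dvdR c a → dvdR c b → dvdR c d

/-- `d` is a least common upper bound of `a` and `b` with respect to `≤_R`. -/
def IsLubR {M : Type*} [Monoid M] (a b d : M) : Prop :=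
  dvdR a d ∧ dvdR b d ∧ ∀ c : M, dvdR a c → dvdR b c → dvdR d c

/-- `M` is a Garside monoid: finitely generated, left and right cancellative, atomic,
`≤_L`- and `≤_R`-lattice conditions, and it possesses a Garside element. -/
def IsGarsideMonoid (M : Type*) [Monoid M] : Prop :=
  (∃ S : Set M, S.Finite ∧ Submonoid.closure S = ⊤) ∧
  (∀ a b c : M, a * b = a * c → b = c) ∧
  (∀ a b c : M, b * a = c * a → b = c) ∧
  Atomic M ∧
  (∀ a b : M, ∃ d, IsGlbL a b d) ∧
  (∀ a b : M, ∃ d, IsLubL a b d) ∧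
  (∀ a b : M, ∃ d, IsGlbR a b d) ∧
  (∀ a b : M, ∃ d, IsLubR a b d) ∧
  (∃ Δ : M, IsGarsideElt Δ)

/-- **Lemma 3.2.** If `Δ₁` and `Δ₂` are Garside elements of a Garside monoid `M`
and `d` is a greatest common lower bound of `Δ₁` and `Δ₂` with respect to `≤_L`,
then `d` is also a greatest common lower bound with respect to `≤_R`, and `d` is
a Garside element of `M`. -/
lemma dvdL_trans' {M : Type*} [Monoid M] {a b c : M} (h1 : dvdL a b) (h2 : dvdL b c) : dvdL a c := by
  obtain ⟨u, rfl⟩ := h1; obtain ⟨v, rfl⟩ := h2; exact ⟨u * v, (mul_assoc _ _ _).symm⟩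

lemma dvdR_trans' {M : Type*} [Monoid M] {a b c : M} (h1 : dvdR a b) (h2 : dvdR b c) : dvdR a c := by
  obtain ⟨u, rfl⟩ := h1; obtain ⟨v, rfl⟩ := h2; exact ⟨v * u, mul_assoc _ _ _⟩

lemma pow_sandwich' {M : Type*} [Monoid M] (b d a : M) (h : b * d * a = d) (n : ℕ) :
    b ^ n * d * a ^ n = d := by
  induction n with
  | zero => simp
  | succ n ih =>
    calc b ^ (n+1) * d * a ^ (n+1) = b * (b ^ n * d * a ^ n) * a := by
          rw [pow_succ' b, pow_succ a]; simp [mul_assoc]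
      _ = d := by rw [ih]; exact h

lemma sandwich_one' {M : Type*} [Monoid M] (hat : Atomic M)
    (lcancel : ∀ a b c : M, a * b = a * c → b = c)
    {b d a : M} (h : b * d * a = d) : b = 1 ∧ a = 1 := by
  obtain ⟨hdec, hbd⟩ := hat
  obtain ⟨N, hN⟩ := hbd d
  obtain ⟨lb, hlb, hlbp⟩ := hdec b
  obtain ⟨la, hla, hlap⟩ := hdec a
  obtain ⟨ld, hld, hldp⟩ := hdec d
  have hb1 : b = 1 := by
    by_contra hb
    have hlen : 1 ≤ lb.length := by
      rcases lb with _ | ⟨x, l⟩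
      · exact absurd (by simpa using hlbp.symm) hb
      · simp
    set n := N + 1 with hn
    have hpow : b ^ n * d * a ^ n = d := pow_sandwich' b d a h n
    set L : List M := (List.replicate n lb).flatten ++ ld ++ (List.replicate n la).flatten with hL
    have hLatom : ∀ x ∈ L, IsAtomElt x := by
      intro x hx
      simp only [hL, List.mem_append, List.mem_flatten, List.mem_replicate] at hx
      rcases hx with (⟨l, ⟨_, rfl⟩, hxl⟩ | hxd) | ⟨l, ⟨_, rfl⟩, hxl⟩
      · exact hlb x hxl
      · exact hld x hxd
      · exact hla x hxl
    have hLprod : L.prod = d := by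
      simp only [hL, List.prod_append, List.prod_flatten, List.map_replicate,
        List.prod_replicate, hlbp, hlap, hldp]
      exact hpow
    have hle := hN L hLatom hLprod
    have hlenL : L.length = n * lb.length + ld.length + n * la.length := by
      simp only [hL, List.length_append, List.length_flatten, List.map_replicate,
        List.sum_replicate, smul_eq_mul]
    have h1 : n ≤ n * lb.length := Nat.le_mul_of_pos_right n (by omega)
    omega
  refine ⟨hb1, ?_⟩
  subst hb1
  have : d * a = d * 1 := by simpa using h
  exact lcancel d a 1 this

lemma atom_mem_of_prod' {M : Type*} [Monoid M] {a : M} (ha : IsAtomElt a) :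
    ∀ l : List M, l.prod = a → ∃ x ∈ l, x = a := by
  intro l
  induction l with
  | nil => intro h; exact absurd h.symm ha.1
  | cons x l ih =>
    intro h
    rcases ha.2 x l.prod (by simpa using h.symm) with hx | hl
    · obtain ⟨y, hy, rfl⟩ := ih (by simpa [hx] using h)
      exact ⟨y, List.mem_cons_of_mem _ hy, rfl⟩
    · exact ⟨x, List.mem_cons_self, by simpa [hl] using h⟩

theorem garside_glb_of_garside_elts {M : Type*} [Monoid M] (hM : IsGarsideMonoid M)
    (Δ₁ Δ₂ d : M) (h₁ : IsGarsideElt Δ₁) (h₂ : IsGarsideElt Δ₂)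
    (hd : IsGlbL Δ₁ Δ₂ d) :
    IsGlbR Δ₁ Δ₂ d ∧ IsGarsideElt d := by
  obtain ⟨-, lcancel, -, hat, -, -, hglbR, -, -⟩ := hM
  -- L(d) = L(Δ₁) ∩ L(Δ₂)
  have hLd : Lset d = Lset Δ₁ ∩ Lset Δ₂ := by
    ext x
    constructor
    · intro hx
      exact ⟨dvdL_trans' hx hd.1, dvdL_trans' hx hd.2.1⟩
    · intro ⟨hx1, hx2⟩
      exact hd.2.2 x hx1 hx2
  -- gcd_R of Δ₁, Δ₂
  obtain ⟨d', hd'⟩ := hglbR Δ₁ Δ₂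
  have hRd' : Rset d' = Rset Δ₁ ∩ Rset Δ₂ := by
    ext x
    constructor
    · intro hx
      exact ⟨dvdR_trans' hx hd'.1, dvdR_trans' hx hd'.2.1⟩
    · intro ⟨hx1, hx2⟩
      exact hd'.2.2 x hx1 hx2
  have hkey : Lset d = Rset d' := by
    rw [hLd, hRd', h₁.1, h₂.1]
  have hdd' : d' = d := by
    have hdmem : d ∈ Rset d' := by
      rw [← hkey]; exact ⟨1, mul_one d⟩
    obtain ⟨b, hb⟩ := hdmem
    have hd'mem : d' ∈ Lset d := by
      rw [hkey]; exact ⟨1, one_mul d'⟩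
    obtain ⟨a, ha⟩ := hd'mem
    have : b * d * a = d := by rw [hb, ha]
    obtain ⟨hb1, -⟩ := sandwich_one' hat lcancel this
    rw [← hb, hb1, one_mul]
  have hRdL : Lset d = Rset d := by rw [hkey, hdd']
  -- every atom left-divides d
  have hatomdvd : ∀ a : M, IsAtomElt a → dvdL a d := by
    intro a ha
    have hmem : ∀ Δ : M, IsGarsideElt Δ → dvdL a Δ := by
      intro Δ hΔ
      have : a ∈ Submonoid.closure (Lset Δ) := by rw [hΔ.2]; trivial
      obtain ⟨l, hl, hlp⟩ := Submonoid.exists_list_of_mem_closure this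
      obtain ⟨x, hx, rfl⟩ := atom_mem_of_prod' ha l hlp
      exact hl x hx
    exact hd.2.2 a (hmem Δ₁ h₁) (hmem Δ₂ h₂)
  have hclos : Submonoid.closure (Lset d) = ⊤ := by
    rw [eq_top_iff]
    intro x _
    obtain ⟨l, hl, rfl⟩ := hat.1 x
    exact Submonoid.list_prod_mem _ fun y hy =>
      Submonoid.subset_closure (hatomdvd y (hl y hy))
  refine ⟨⟨?_, ?_, ?_⟩, hRdL, hclos⟩
  · have : d ∈ Rset Δ₁ := by
      have : d ∈ Lset d := ⟨1, mul_one d⟩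
      rw [hLd, h₁.1, h₂.1] at this
      exact this.1
    exact this
  · have : d ∈ Rset Δ₂ := by
      have : d ∈ Lset d := ⟨1, mul_one d⟩
      rw [hLd, h₁.1, h₂.1] at this
      exact this.2
    exact this
  · intro c hc1 hc2
    have : c ∈ Lset d := by rw [hLd, h₁.1, h₂.1]; exact ⟨hc1, hc2⟩
    rw [hRdL] at this
    exact this
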